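/- Let Ĥ = [e, H] ∈ ℝ^{N×(n+1)} with full column rank, μ = (1/N)H^T e ≠ 0, and U = [[1, -μ^T],[0, I_n]]. Let x_max be an eigenvector of (H - eμ^T)^T(H - eμ^T) corresponding to its largest eigenvalue. If μ^T x_max ≠ 0, then λ_max(U^T Ĥ^T Ĥ U) < λ_max(Ĥ^T Ĥ) strictly, and hence κ(ĤU) < κ(Ĥ). -/

import Mathlib

open Matrix

/-- The set of eigenvalues of a real square matrix. -/
noncomputable def eigs {m : ℕ} (A : Matrix (Fin m) (Fin m) ℝ) : Set ℝ :=
  {μ | ∃ v : Fin m → ℝ, v ≠ 0 ∧ A.mulVec v = μ • v}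

noncomputable def lamMax {m : ℕ} (A : Matrix (Fin m) (Fin m) ℝ) : ℝ := sSup (eigs A)

/-- Ĥ = [e, H] : prepend a column of ones to H -/
noncomputable def hatM {N n : ℕ} (H : Matrix (Fin N) (Fin n) ℝ) :
    Matrix (Fin N) (Fin (n + 1)) ℝ :=
  Matrix.of fun i j => Fin.cases (motive := fun _ => ℝ) 1 (fun j' => H i j') j

/-- U = [[1, -μᵀ],[0, I]] : the centering transformation -/
noncomputable def centerU {n : ℕ} (μ : Fin n → ℝ) : Matrix (Fin (n + 1)) (Fin (n + 1)) ℝ :=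
  Matrix.of fun i j =>
    Fin.cases (motive := fun _ => ℝ)
      (Fin.cases (motive := fun _ => ℝ) 1 (fun j' => -μ j') j)
      (fun i' => Fin.cases (motive := fun _ => ℝ) 0 (fun j' => if i' = j' then 1 else 0) j) i


noncomputable def lamMin {m : ℕ} (A : Matrix (Fin m) (Fin m) ℝ) : ℝ := sInf (eigs A)

/-- 2-norm condition number σ_max/σ_min of a full column rank matrix -/
noncomputable def condFull {m n : ℕ} (A : Matrix (Fin m) (Fin n) ℝ) : ℝ :=
  Real.sqrt (lamMax (Aᵀ * A) / lamMin (Aᵀ * A))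

variable {m : ℕ} {A : Matrix (Fin m) (Fin m) ℝ}

lemma range_subset_eigs (hA : A.IsHermitian) : Set.range hA.eigenvalues ⊆ eigs A := by
  rintro ν ⟨i, rfl⟩
  exact ⟨hA.eigenvectorBasis i, by simpa using hA.eigenvectorBasis.orthonormal.ne_zero i,
    hA.mulVec_eigenvectorBasis i⟩

lemma eigs_subset_range (hA : A.IsHermitian) : eigs A ⊆ Set.range hA.eigenvalues := by
  rintro ν ⟨v, hv, hAv⟩
  by_contra hne
  have hdet : (A - ν • 1).det ≠ 0 := by
    have hsp := hA.spectral_theorem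
    set V : Matrix (Fin m) (Fin m) ℝ := (hA.eigenvectorUnitary : Matrix (Fin m) (Fin m) ℝ)
    have hVs : V * star V = 1 := (Matrix.mem_unitaryGroup_iff).mp hA.eigenvectorUnitary.2
    have h1 : A - ν • 1 = V * (diagonal (RCLike.ofReal ∘ hA.eigenvalues) - ν • 1) * star V := by
      simp only [Unitary.conjStarAlgAut_apply, Unitary.coe_star] at hsp
      rw [Matrix.mul_sub, Matrix.sub_mul, ← hsp]
      congr 1
      rw [Matrix.mul_smul, Matrix.smul_mul, mul_one, hVs]
    rw [h1, Matrix.det_mul, Matrix.det_mul]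
    have hdiag : (diagonal (RCLike.ofReal ∘ hA.eigenvalues) - ν • (1 : Matrix (Fin m) (Fin m) ℝ))
        = diagonal (fun i => hA.eigenvalues i - ν) := by
      ext i j
      rcases eq_or_ne i j with rfl | h
      · simp [Matrix.one_apply]
      · simp [Matrix.diagonal_apply_ne _ h, Matrix.one_apply, h]
    have hVdet : V.det * (star V).det ≠ 0 := by
      rw [← Matrix.det_mul, hVs, Matrix.det_one]; norm_num
    rw [mul_comm, ← mul_assoc, mul_comm ((star V).det), hdiag, Matrix.det_diagonal]
    refine mul_ne_zero hVdet (Finset.prod_ne_zero_iff.2 fun i _ => ?_)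
    intro h
    exact hne ⟨i, by linarith [sub_eq_zero.mp h]⟩
  have hunit : IsUnit (A - ν • 1) := by
    rw [Matrix.isUnit_iff_isUnit_det]; exact hdet.isUnit
  have h0 : (A - ν • 1) *ᵥ v = 0 := by
    rw [Matrix.sub_mulVec, hAv, Matrix.smul_mulVec, Matrix.one_mulVec]
    simp
  have := Matrix.mulVec_injective_iff_isUnit.mpr hunit
  exact hv (by simpa using this (h0.trans (Matrix.mulVec_zero _).symm))

lemma eigs_eq_range (hA : A.IsHermitian) : eigs A = Set.range hA.eigenvalues :=
  le_antisymm (eigs_subset_range hA) (range_subset_eigs hA)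

lemma eigs_finite (hA : A.IsHermitian) : (eigs A).Finite := by
  rw [eigs_eq_range hA]; exact Set.finite_range _

lemma eigs_bddAbove (hA : A.IsHermitian) : BddAbove (eigs A) := (eigs_finite hA).bddAbove
lemma eigs_bddBelow (hA : A.IsHermitian) : BddBelow (eigs A) := (eigs_finite hA).bddBelow

lemma lamMax_mem (hA : A.IsHermitian) (hne : (eigs A).Nonempty) : lamMax A ∈ eigs A :=
  hne.csSup_mem (eigs_finite hA)

lemma lamMin_mem (hA : A.IsHermitian) (hne : (eigs A).Nonempty) : lamMin A ∈ eigs A :=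
  hne.csInf_mem (eigs_finite hA)

lemma le_lamMax (hA : A.IsHermitian) {ν : ℝ} (h : ν ∈ eigs A) : ν ≤ lamMax A :=
  le_csSup (eigs_bddAbove hA) h

lemma lamMin_le (hA : A.IsHermitian) {ν : ℝ} (h : ν ∈ eigs A) : lamMin A ≤ ν :=
  csInf_le (eigs_bddBelow hA) h

lemma rayleigh_le_lamMax (hA : A.IsHermitian) (v : Fin m → ℝ) :
    v ⬝ᵥ A *ᵥ v ≤ lamMax A * (v ⬝ᵥ v) := by
  set K := lamMax A with hK
  set B : Matrix (Fin m) (Fin m) ℝ := K • 1 - A with hB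
  have hBh : B.IsHermitian := by
    simp [Matrix.IsHermitian, hB, Matrix.conjTranspose_sub, Matrix.conjTranspose_smul, hA.eq]
    exact hA.eq
  have hpsd : B.PosSemidef := by
    refine (Matrix.IsHermitian.posSemidef_iff_eigenvalues_nonneg hBh).mpr fun i => ?_
    obtain ⟨w, hw, hBw⟩ := range_subset_eigs hBh ⟨i, rfl⟩
    have hAw : A *ᵥ w = (K - hBh.eigenvalues i) • w := by
      have : K • w - A *ᵥ w = hBh.eigenvalues i • w := by
        rw [← hBw, hB, Matrix.sub_mulVec, Matrix.smul_mulVec, Matrix.one_mulVec]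
      rw [sub_smul, ← this]; abel
    have : K - hBh.eigenvalues i ≤ K := le_lamMax hA ⟨w, hw, hAw⟩
    simp only [Pi.zero_apply]; linarith
  have h0 := hpsd.dotProduct_mulVec_nonneg v
  rw [star_trivial] at h0
  have : v ⬝ᵥ B *ᵥ v = K * (v ⬝ᵥ v) - v ⬝ᵥ A *ᵥ v := by
    rw [hB, Matrix.sub_mulVec, Matrix.smul_mulVec, Matrix.one_mulVec, dotProduct_sub,
      dotProduct_smul]
    simp [smul_eq_mul]
  linarith [this ▸ h0]

lemma lamMin_rayleigh_le (hA : A.IsHermitian) (v : Fin m → ℝ) :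
    lamMin A * (v ⬝ᵥ v) ≤ v ⬝ᵥ A *ᵥ v := by
  set K := lamMin A with hK
  set B : Matrix (Fin m) (Fin m) ℝ := A - K • 1 with hB
  have hBh : B.IsHermitian := by
    simp [Matrix.IsHermitian, hB, Matrix.conjTranspose_sub, Matrix.conjTranspose_smul, hA.eq]
    exact hA.eq
  have hpsd : B.PosSemidef := by
    refine (Matrix.IsHermitian.posSemidef_iff_eigenvalues_nonneg hBh).mpr fun i => ?_
    obtain ⟨w, hw, hBw⟩ := range_subset_eigs hBh ⟨i, rfl⟩
    have hAw : A *ᵥ w = (K + hBh.eigenvalues i) • w := by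
      have : A *ᵥ w - K • w = hBh.eigenvalues i • w := by
        rw [← hBw, hB, Matrix.sub_mulVec, Matrix.smul_mulVec, Matrix.one_mulVec]
      rw [add_smul, ← this]; abel
    have : K ≤ K + hBh.eigenvalues i := lamMin_le hA ⟨w, hw, hAw⟩
    simp only [Pi.zero_apply]; linarith
  have h0 := hpsd.dotProduct_mulVec_nonneg v
  rw [star_trivial] at h0
  have : v ⬝ᵥ B *ᵥ v = v ⬝ᵥ A *ᵥ v - K * (v ⬝ᵥ v) := by
    rw [hB, Matrix.sub_mulVec, Matrix.smul_mulVec, Matrix.one_mulVec, dotProduct_sub,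
      dotProduct_smul]
    simp [smul_eq_mul]
  linarith [this ▸ h0]

noncomputable def blockD {n : ℕ} (a : ℝ) (M : Matrix (Fin n) (Fin n) ℝ) :
    Matrix (Fin (n + 1)) (Fin (n + 1)) ℝ :=
  Matrix.of fun i j =>
    Fin.cases (motive := fun _ => ℝ)
      (Fin.cases (motive := fun _ => ℝ) a (fun _ => 0) j)
      (fun i' => Fin.cases (motive := fun _ => ℝ) 0 (fun j' => M i' j') j) i

lemma blockD_mulVec {n : ℕ} (a : ℝ) (M : Matrix (Fin n) (Fin n) ℝ) (v : Fin (n + 1) → ℝ) :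
    (blockD a M) *ᵥ v = Fin.cases (a * v 0) (fun i' => (M *ᵥ (v ∘ Fin.succ)) i') := by
  funext i
  induction i using Fin.cases with
  | zero => simp [blockD, Matrix.mulVec, dotProduct, Fin.sum_univ_succ]
  | succ i' => simp [blockD, Matrix.mulVec, dotProduct, Fin.sum_univ_succ, Function.comp]

lemma eigs_blockD {n : ℕ} (a : ℝ) (M : Matrix (Fin n) (Fin n) ℝ) :
    eigs (blockD a M) = {a} ∪ eigs M := by
  ext ν
  constructor
  · rintro ⟨v, hv, hDv⟩
    rw [blockD_mulVec] at hDv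
    have h0 : a * v 0 = ν * v 0 := by
      have := congrFun hDv 0
      simpa using this
    have hsucc : M *ᵥ (v ∘ Fin.succ) = ν • (v ∘ Fin.succ) := by
      funext i'
      have := congrFun hDv i'.succ
      simpa using this
    by_cases hv0 : v 0 = 0
    · right
      refine ⟨v ∘ Fin.succ, ?_, hsucc⟩
      intro hz
      apply hv
      funext i
      induction i using Fin.cases with
      | zero => exact hv0
      | succ i' => exact congrFun hz i'
    · left
      have : a = ν := by
        exact mul_right_cancel₀ hv0 h0
      exact this ▸ rfl
  · rintro (rfl | ⟨w, hw, hMw⟩)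
    · refine ⟨Fin.cases 1 0, ?_, ?_⟩
      · intro hz
        have := congrFun hz 0
        simp at this
      · rw [blockD_mulVec]
        funext i
        induction i using Fin.cases with
        | zero => simp
        | succ i' =>
          simp [Matrix.mulVec, dotProduct]
    · refine ⟨Fin.cases 0 w, ?_, ?_⟩
      · intro hz
        apply hw
        funext i
        have := congrFun hz i.succ
        simpa using this
      · rw [blockD_mulVec]
        funext i
        induction i using Fin.cases with
        | zero => simp
        | succ i' =>
          have hcomp : (Fin.cases (motive := fun _ => ℝ) 0 w) ∘ Fin.succ = w := by
            funext j; simp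
          simp [hcomp, hMw]

lemma lamMax_blockD {n : ℕ} (a : ℝ) {M : Matrix (Fin n) (Fin n) ℝ} (hM : M.IsHermitian)
    (hne : (eigs M).Nonempty) : lamMax (blockD a M) = max a (lamMax M) := by
  rw [lamMax, eigs_blockD, csSup_union (bddAbove_singleton) (Set.singleton_nonempty a)
    (eigs_bddAbove hM) hne, csSup_singleton]
  rfl

lemma lamMin_blockD {n : ℕ} (a : ℝ) {M : Matrix (Fin n) (Fin n) ℝ} (hM : M.IsHermitian)
    (hne : (eigs M).Nonempty) : lamMin (blockD a M) = min a (lamMin M) := by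
  rw [lamMin, eigs_blockD, csInf_union (bddBelow_singleton) (Set.singleton_nonempty a)
    (eigs_bddBelow hM) hne, csInf_singleton]
  rfl

lemma hatM_mul_centerU {N n : ℕ} (H : Matrix (Fin N) (Fin n) ℝ) (μ : Fin n → ℝ) :
    hatM H * centerU μ =
      Matrix.of fun i j => Fin.cases (motive := fun _ => ℝ) 1 (fun j' => H i j' - μ j') j := by
  ext i j
  induction j using Fin.cases with
  | zero => simp [hatM, centerU, Matrix.mul_apply, Fin.sum_univ_succ]
  | succ j' =>
    simp [hatM, centerU, Matrix.mul_apply, Fin.sum_univ_succ, mul_ite,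
      Finset.sum_ite_eq', sub_eq_neg_add]

lemma centered_gram {N n : ℕ} (H : Matrix (Fin N) (Fin n) ℝ) (μ : Fin n → ℝ)
    (hN : (N : ℝ) ≠ 0) (hμ' : ∀ j, μ j = (1 / (N : ℝ)) * ∑ i, H i j)
    (M : Matrix (Fin n) (Fin n) ℝ)
    (hM : M = (H - Matrix.of fun _ j => μ j)ᵀ * (H - Matrix.of fun _ j => μ j)) :
    (centerU μ)ᵀ * (hatM H)ᵀ * hatM H * centerU μ = blockD (N : ℝ) M := by
  have h1 : (centerU μ)ᵀ * (hatM H)ᵀ * hatM H * centerU μ =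
      (hatM H * centerU μ)ᵀ * (hatM H * centerU μ) := by
    rw [Matrix.transpose_mul, Matrix.mul_assoc]
  rw [h1, hatM_mul_centerU]
  have hsum : ∀ j, ∑ i, H i j = (N : ℝ) * μ j := by
    intro j; rw [hμ']; field_simp
  ext i j
  induction i using Fin.cases with
  | zero =>
    induction j using Fin.cases with
    | zero => simp [blockD, Matrix.mul_apply]
    | succ j' =>
      simp [blockD, Matrix.mul_apply, Finset.sum_sub_distrib, hsum j']
  | succ i' =>
    induction j using Fin.cases with
    | zero =>
      simp [blockD, Matrix.mul_apply, Finset.sum_sub_distrib, hsum i']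
    | succ j' =>
      simp [blockD, Matrix.mul_apply, hM, Matrix.sub_apply]

lemma dot_transpose_mul {m k : ℕ} (B : Matrix (Fin m) (Fin k) ℝ) (x y : Fin k → ℝ) :
    x ⬝ᵥ (Bᵀ * B) *ᵥ y = (B *ᵥ x) ⬝ᵥ (B *ᵥ y) := by
  rw [← Matrix.mulVec_mulVec, Matrix.dotProduct_mulVec, Matrix.vecMul_transpose]

lemma posDef_of_rank {m k : ℕ} (B : Matrix (Fin m) (Fin k) ℝ) (h : B.rank = k) :
    (Bᵀ * B).PosDef := by
  have hker : LinearMap.ker B.mulVecLin = ⊥ := by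
    have h1 := LinearMap.finrank_range_add_finrank_ker B.mulVecLin
    rw [Module.finrank_fintype_fun_eq_card, Fintype.card_fin] at h1
    have h2 : Module.finrank ℝ (LinearMap.range B.mulVecLin) = k := h
    refine Submodule.finrank_eq_zero.mp ?_
    omega
  have hinj : ∀ x : Fin k → ℝ, x ≠ 0 → B *ᵥ x ≠ 0 := by
    intro x hx hBx
    exact hx (LinearMap.ker_eq_bot.mp hker (by simpa [Matrix.mulVecLin] using hBx))
  refine Matrix.PosDef.of_dotProduct_mulVec_pos (by have h := Matrix.isHermitian_conjTranspose_mul_self B; rwa [Matrix.conjTranspose_eq_transpose_of_trivial] at h) fun x hx => ?_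
  rw [star_trivial, dot_transpose_mul]
  have := hinj x hx
  have h3 : (B *ᵥ x) ⬝ᵥ star (B *ᵥ x) = (B *ᵥ x) ⬝ᵥ (B *ᵥ x) := by rw [star_trivial]
  rw [← h3]
  exact Matrix.dotProduct_self_star_pos_iff.mpr this

lemma cases_comp_succ {n : ℕ} (t : ℝ) (x : Fin n → ℝ) :
    (Fin.cases (motive := fun _ => ℝ) t x) ∘ Fin.succ = x := by
  funext j; simp

lemma conj_dot {N' n : ℕ} (Hm : Matrix (Fin N') (Fin (n + 1)) ℝ)
    (U G : Matrix (Fin (n + 1)) (Fin (n + 1)) ℝ) (hG : Uᵀ * Hmᵀ * Hm * U = G)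
    (y : Fin (n + 1) → ℝ) :
    (U *ᵥ y) ⬝ᵥ (Hmᵀ * Hm) *ᵥ (U *ᵥ y) = y ⬝ᵥ G *ᵥ y := by
  rw [dot_transpose_mul, Matrix.mulVec_mulVec, ← dot_transpose_mul (Hm * U) y y,
    Matrix.transpose_mul, ← Matrix.mul_assoc, hG]

lemma blockQuad {n : ℕ} (a : ℝ) (M : Matrix (Fin n) (Fin n) ℝ) (t : ℝ) (x : Fin n → ℝ) :
    (Fin.cases (motive := fun _ => ℝ) t x) ⬝ᵥ
      (blockD a M) *ᵥ (Fin.cases (motive := fun _ => ℝ) t x) = a * t ^ 2 + x ⬝ᵥ M *ᵥ x := by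
  rw [blockD_mulVec]
  simp [dotProduct, Fin.sum_univ_succ, cases_comp_succ, Matrix.mulVec]
  ring

lemma centerU_mulVec {n : ℕ} (μ : Fin n → ℝ) (t : ℝ) (x : Fin n → ℝ) :
    centerU μ *ᵥ (Fin.cases (motive := fun _ => ℝ) t x) =
      Fin.cases (motive := fun _ => ℝ) (t - μ ⬝ᵥ x) x := by
  funext i
  induction i using Fin.cases with
  | zero =>
    simp [centerU, Matrix.mulVec, dotProduct, Fin.sum_univ_succ, sub_eq_add_neg,
      Finset.sum_neg_distrib]
  | succ i' =>
    simp [centerU, Matrix.mulVec, dotProduct, Fin.sum_univ_succ, ite_mul,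
      Finset.sum_ite_eq]

lemma cases_dot_self {n : ℕ} (t : ℝ) (x : Fin n → ℝ) :
    (Fin.cases (motive := fun _ => ℝ) t x) ⬝ᵥ (Fin.cases (motive := fun _ => ℝ) t x)
      = t ^ 2 + x ⬝ᵥ x := by
  simp [dotProduct, Fin.sum_univ_succ]
  ring

theorem stmt4 {N n : ℕ} (H : Matrix (Fin N) (Fin n) ℝ)
    (μ : Fin n → ℝ) (hμ' : ∀ j, μ j = (1 / (N : ℝ)) * ∑ i, H i j)
    (hrank : (hatM H).rank = n + 1) (hμ0 : μ ≠ 0)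
    -- M := (H - eμᵀ)ᵀ(H - eμᵀ), the sample (unnormalized) covariance matrix
    (M : Matrix (Fin n) (Fin n) ℝ)
    (hM : M = (H - Matrix.of fun _ j => μ j)ᵀ * (H - Matrix.of fun _ j => μ j))
    (xmax : Fin n → ℝ) (hx0 : xmax ≠ 0)
    (hxeig : M.mulVec xmax = lamMax M • xmax)
    (hortho : μ ⬝ᵥ xmax ≠ 0) :
    lamMax ((centerU μ)ᵀ * (hatM H)ᵀ * hatM H * centerU μ) <
        lamMax ((hatM H)ᵀ * hatM H) ∧
      condFull (hatM H * centerU μ) < condFull (hatM H) := by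
  classical
  have hNn : n + 1 ≤ N := by
    have h := Matrix.rank_le_card_height (hatM H)
    rwa [hrank, Fintype.card_fin] at h
  have hNpos : (0 : ℝ) < N := by
    have : 0 < N := lt_of_lt_of_le (Nat.succ_pos n) hNn
    exact_mod_cast this
  have hNne : (N : ℝ) ≠ 0 := ne_of_gt hNpos
  have hA : ((hatM H)ᵀ * hatM H).IsHermitian := by have h := Matrix.isHermitian_conjTranspose_mul_self (hatM H); rwa [Matrix.conjTranspose_eq_transpose_of_trivial] at h
  have hApd : ((hatM H)ᵀ * hatM H).PosDef := posDef_of_rank (hatM H) hrank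
  have hMh : M.IsHermitian := by rw [hM]; have h := Matrix.isHermitian_conjTranspose_mul_self (H - Matrix.of fun _ j => μ j); rwa [Matrix.conjTranspose_eq_transpose_of_trivial] at h
  have hGram : (centerU μ)ᵀ * (hatM H)ᵀ * hatM H * centerU μ = blockD (N : ℝ) M :=
    centered_gram H μ hNne hμ' M hM
  have eigsM_ne : (eigs M).Nonempty := ⟨lamMax M, xmax, hx0, hxeig⟩
  have eigsA_ne : (eigs ((hatM H)ᵀ * hatM H)).Nonempty :=
    ⟨hA.eigenvalues ⟨0, Nat.succ_pos n⟩, range_subset_eigs hA ⟨⟨0, Nat.succ_pos n⟩, rfl⟩⟩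
  set K := lamMax ((hatM H)ᵀ * hatM H) with hKdef
  set lM := lamMax M with hlMdef
  set c := μ ⬝ᵥ xmax with hcdef
  set S := xmax ⬝ᵥ xmax with hSdef
  have hS : 0 < S := by
    have h := (Matrix.dotProduct_self_star_pos_iff (v := xmax)).mpr hx0
    rwa [star_trivial] at h
  have hxMx : xmax ⬝ᵥ M *ᵥ xmax = lM * S := by
    rw [hxeig, dotProduct_smul, smul_eq_mul]
  have q1 : ∀ (t : ℝ) (x : Fin n → ℝ),
      (centerU μ *ᵥ Fin.cases (motive := fun _ => ℝ) t x) ⬝ᵥ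
        ((hatM H)ᵀ * hatM H) *ᵥ (centerU μ *ᵥ Fin.cases (motive := fun _ => ℝ) t x)
        = N * t ^ 2 + x ⬝ᵥ M *ᵥ x := by
    intro t x
    rw [conj_dot (hatM H) (centerU μ) _ hGram, blockQuad]
  have q2 : ∀ (t : ℝ) (x : Fin n → ℝ),
      (centerU μ *ᵥ Fin.cases (motive := fun _ => ℝ) t x) ⬝ᵥ
        (centerU μ *ᵥ Fin.cases (motive := fun _ => ℝ) t x)
        = (t - μ ⬝ᵥ x) ^ 2 + x ⬝ᵥ x := by
    intro t x
    rw [centerU_mulVec, cases_dot_self]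
  have hc2 : 0 < c ^ 2 := by positivity
  have hKmax : max (N : ℝ) lM < K := by
    rcases le_or_gt (N : ℝ) lM with hcase | hcase
    · rw [max_eq_right hcase]
      have r := rayleigh_le_lamMax hA (centerU μ *ᵥ Fin.cases (motive := fun _ => ℝ) c xmax)
      rw [q1, q2, hxMx, ← hcdef, ← hSdef] at r
      have hr : (N : ℝ) * c ^ 2 + lM * S ≤ K * S := by
        simpa using r
      nlinarith [mul_pos hNpos hc2]
    · rw [max_eq_left hcase.le]
      set t := ((N : ℝ) * c ^ 2 + ((N : ℝ) - lM) * S + 1) / (2 * N * c) with htdef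
      have ht : 2 * (N : ℝ) * c * t = (N : ℝ) * c ^ 2 + ((N : ℝ) - lM) * S + 1 := by
        rw [htdef]
        field_simp
      have r := rayleigh_le_lamMax hA (centerU μ *ᵥ Fin.cases (motive := fun _ => ℝ) t xmax)
      rw [q1, q2, hxMx, ← hcdef, ← hSdef] at r
      nlinarith [sq_nonneg (t - c)]
  refine ⟨by rw [hGram, lamMax_blockD _ hMh eigsM_ne]; exact hKmax, ?_⟩
  -- condition number part
  set kmin := lamMin ((hatM H)ᵀ * hatM H) with hkmindef
  obtain ⟨v0, hv00, hv0e⟩ := lamMin_mem hA eigsA_ne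
  have hkminpos : 0 < kmin := by
    have hd := hApd.dotProduct_mulVec_pos hv00
    rw [star_trivial, hv0e, dotProduct_smul, smul_eq_mul] at hd
    have hv0d : 0 < v0 ⬝ᵥ v0 := by
      have h := (Matrix.dotProduct_self_star_pos_iff (v := v0)).mpr hv00
      rwa [star_trivial] at h
    nlinarith
  have hkN : kmin ≤ (N : ℝ) := by
    have r := lamMin_rayleigh_le hA (centerU μ *ᵥ Fin.cases (motive := fun _ => ℝ) 1 (0 : Fin n → ℝ))
    rw [q1, q2] at r
    simpa using r
  set lm := lamMin M with hlmdef
  obtain ⟨w, hw0, hwe⟩ := lamMin_mem hMh eigsM_ne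
  have hwS : 0 < w ⬝ᵥ w := by
    have h := (Matrix.dotProduct_self_star_pos_iff (v := w)).mpr hw0
    rwa [star_trivial] at h
  have hwMw : w ⬝ᵥ M *ᵥ w = lm * (w ⬝ᵥ w) := by
    rw [hwe, dotProduct_smul, smul_eq_mul]
  have hlm0 : 0 ≤ lm := by
    have h1 : 0 ≤ w ⬝ᵥ M *ᵥ w := by
      rw [hM, dot_transpose_mul]
      have h := dotProduct_self_star_nonneg ((H - Matrix.of fun _ j => μ j) *ᵥ w)
      rwa [star_trivial] at h
    nlinarith
  have hklm : kmin ≤ lm := by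
    have r := lamMin_rayleigh_le hA (centerU μ *ᵥ Fin.cases (motive := fun _ => ℝ) 0 w)
    rw [q1, q2, hwMw] at r
    nlinarith [sq_nonneg (0 - μ ⬝ᵥ w)]
  have hCC : (hatM H * centerU μ)ᵀ * (hatM H * centerU μ) = blockD (N : ℝ) M := by
    rw [Matrix.transpose_mul, ← Matrix.mul_assoc]
    exact hGram
  have hmaxpos : 0 < max (N : ℝ) lM := lt_of_lt_of_le hNpos (le_max_left _ _)
  have hminpos : 0 < min (N : ℝ) lm := lt_of_lt_of_le hkminpos (le_min hkN hklm)
  rw [condFull, condFull, hCC, lamMax_blockD _ hMh eigsM_ne, lamMin_blockD _ hMh eigsM_ne,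
    ← hKdef, ← hkmindef, ← hlMdef, ← hlmdef]
  apply Real.sqrt_lt_sqrt (div_nonneg hmaxpos.le hminpos.le)
  rw [div_lt_div_iff₀ hminpos hkminpos]
  have hle : kmin ≤ min (N : ℝ) lm := le_min hkN hklm
  nlinarith
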